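/- In the setting of a (P2+P3, complement-of-(P2+P3))-free graph G with induced 5-cycle C on v1,...,v5, for every i in {1,...,5} every vertex of V_{1,2,3,4,5} is adjacent to every vertex of V_{i,i+2}. -/

import Mathlib

/-- `G` contains no induced subgraph isomorphic to `H`. -/
def InducedFree {α V : Type*} (G : SimpleGraph V) (H : SimpleGraph α) : Prop :=
  ∀ f : α ↪ V, ¬ (∀ a b : α, H.Adj a b ↔ G.Adj (f a) (f b))

/-- `P₂ + P₃`: the disjoint union of a 2-vertex path and a 3-vertex path. -/
def P2PlusP3 : SimpleGraph (Fin 5) :=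
  SimpleGraph.fromRel fun a b => (a = 0 ∧ b = 1) ∨ (a = 2 ∧ b = 3) ∨ (a = 3 ∧ b = 4)

/-- `VS G v S`: the vertices outside the 5-cycle `v 0, …, v 4` whose
neighbourhood on the cycle is exactly `{v i : i ∈ S}`. -/
def VS {V : Type*} (G : SimpleGraph V) (v : ZMod 5 → V) (S : Set (ZMod 5)) : Set V :=
  {x | (∀ i, x ≠ v i) ∧ ∀ i, G.Adj x (v i) ↔ i ∈ S}

/-- For each `i`, every vertex of `V_{1,2,3,4,5}` is adjacent to every
vertex of `V_{i,i+2}`. -/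
theorem stmt_15 {V : Type*} [Fintype V] (G : SimpleGraph V)
    (hG : InducedFree G P2PlusP3) (hGc : InducedFree Gᶜ P2PlusP3)
    (v : ZMod 5 → V) (hv : Function.Injective v)
    (hC : ∀ i j : ZMod 5, G.Adj (v i) (v j) ↔ j = i + 1 ∨ j = i - 1) :
    ∀ i : ZMod 5, ∀ x ∈ VS G v (Set.univ : Set (ZMod 5)), ∀ y ∈ VS G v {i, i + 2},
      G.Adj x y := by
  intro i x hx y hy
  by_contra hxy
  obtain ⟨hxv, hxadj⟩ := hx
  obtain ⟨hyv, hyadj⟩ := hy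
  have hxall : ∀ j, G.Adj x (v j) := fun j => (hxadj j).mpr trivial
  have hyi : G.Adj y (v i) := (hyadj i).mpr (Or.inl rfl)
  have hyi2 : G.Adj y (v (i + 2)) := (hyadj _).mpr (Or.inr rfl)
  have hyn1 : ¬ G.Adj y (v (i + 1)) := by
    intro h
    have h' := (hyadj _).mp h
    simp only [Set.mem_insert_iff, Set.mem_singleton_iff] at h'
    rcases h' with h' | h'
    · exact absurd (add_left_cancel (show i + 1 = i + 0 by simpa using h')) (by decide)
    · exact absurd (add_left_cancel h') (by decide)
  have hxyne : x ≠ y := fun h => hyn1 (h ▸ hxall (i + 1))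
  have hvi2 : ¬ G.Adj (v i) (v (i + 2)) := by
    rw [hC]
    rintro (h | h)
    · exact absurd (add_left_cancel (show i + 2 = i + 1 from h)) (by decide)
    · rw [sub_eq_add_neg] at h
      exact absurd (add_left_cancel h) (by decide)
  have h01 : G.Adj (v i) (v (i + 1)) := (hC _ _).mpr (Or.inl rfl)
  have h21 : G.Adj (v (i + 2)) (v (i + 1)) := (hC _ _).mpr (Or.inr (by ring))
  have hvne : ∀ a b : ZMod 5, a ≠ b → v (i + a) ≠ v (i + b) :=
    fun a b h e => h (add_left_cancel (hv e))
  have n02 : v i ≠ v (i + 2) := by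
    have := hvne 0 2 (by decide); simpa using this
  have n01 : v i ≠ v (i + 1) := by
    have := hvne 0 1 (by decide); simpa using this
  have n21 : v (i + 2) ≠ v (i + 1) := hvne 2 1 (by decide)
  have hinj : Function.Injective ![v i, v (i + 2), x, y, v (i + 1)] := by
    intro a b hab
    fin_cases a <;> fin_cases b <;>
      simp_all [hxv i, hxv (i+1), hxv (i+2), hyv i, hyv (i+1), hyv (i+2),
        (hxv i).symm, (hxv (i+1)).symm, (hxv (i+2)).symm,
        (hyv i).symm, (hyv (i+1)).symm, (hyv (i+2)).symm, n02.symm, n01.symm, n21.symm]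
  have hxy' : ¬ G.Adj y x := fun h => hxy h.symm
  have hvi2' : ¬ G.Adj (v (i + 2)) (v i) := fun h => hvi2 h.symm
  have hyn1' : ¬ G.Adj (v (i + 1)) y := fun h => hyn1 h.symm
  apply hGc ⟨![v i, v (i + 2), x, y, v (i + 1)], hinj⟩
  intro a b
  fin_cases a <;> fin_cases b <;>
    simp [P2PlusP3, SimpleGraph.fromRel_adj, SimpleGraph.compl_adj,
      hxall, hyi, hyi2, hyn1, hxy, hxy', hvi2, hvi2', hyn1', h01, h21,
      (hxall i).symm, (hxall (i+1)).symm, (hxall (i+2)).symm,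
      hyi.symm, hyi2.symm, h01.symm, h21.symm,
      hxv, hyv, hxyne, hxyne.symm, n02, n01, n21, n02.symm, n01.symm, n21.symm,
      fun j => (hxv j).symm, fun j => (hyv j).symm] <;> (try decide)
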